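/- arXiv:1402.3693 — 2 statements merged into one kernel-verified Lean document; each statement's English description precedes it below -/
import Mathlib

section
/- Let p be an odd prime and k ≥ 1 a natural number such that (p−1) does not divide 2k. Then the rational number B_{2k} / (2k), where B_{2k} is the 2k-th Bernoulli number, is p-integral; that is, padicValRat p (bernoulli (2k) / (2k)) ≥ 0. -/
open Finset

variable {p : ℕ} [hp : Fact p.Prime]

lemma padicNorm_pow (q : ℚ) (n : ℕ) : padicNorm p (q ^ n) = padicNorm p q ^ n := by
  induction n with
  | zero => simp [padicNorm.one]
  | succ n ih => rw [pow_succ, pow_succ, padicNorm.mul, ih]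

lemma padicNorm_nat_le_one (n : ℕ) : padicNorm p (n : ℚ) ≤ 1 := by
  simpa using padicNorm.of_int (p := p) (n : ℤ)

lemma three_le_pow (v : ℕ) (hv : 1 ≤ v) : v + 2 ≤ 3 ^ v := by
  induction v with
  | zero => omega
  | succ v ih =>
    rcases Nat.eq_or_lt_of_le hv with h | h
    · simp [← h]
    · have h2 : v + 2 ≤ 3 ^ v := ih (by omega)
      calc v + 1 + 2 ≤ 3 * (v + 2) := by omega
        _ ≤ 3 * 3 ^ v := by omega
        _ = 3 ^ (v+1) := by ring

lemma padicValNat_le_sub_two (hp3 : 3 ≤ p) {t : ℕ} (ht : 2 ≤ t) :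
    padicValNat p t ≤ t - 2 := by
  set v := padicValNat p t with hv
  rcases Nat.eq_zero_or_pos v with h | h
  · omega
  · have hdvd : p ^ v ∣ t := pow_padicValNat_dvd
    have h1 : p ^ v ≤ t := Nat.le_of_dvd (by omega) hdvd
    have h2 : 3 ^ v ≤ p ^ v := Nat.pow_le_pow_left hp3 v
    have h3 : v + 2 ≤ 3 ^ v := three_le_pow v h
    omega

lemma padicNorm_nat_inv_le (hp3 : 3 ≤ p) {t : ℕ} (ht : 2 ≤ t) :
    padicNorm p ((t : ℚ))⁻¹ ≤ (p : ℚ) ^ ((t : ℤ) - 2) := by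
  have htq : (t : ℚ) ≠ 0 := by positivity
  have hval : padicNorm p (t : ℚ) = (p : ℚ) ^ (-(padicValNat p t : ℤ)) := by
    simp [padicNorm, htq, padicValRat.of_nat]
  have hppos : (0:ℚ) < p := by exact_mod_cast hp.out.pos
  rw [show ((t:ℚ))⁻¹ = 1 / t by ring, padicNorm.div, padicNorm.one, hval, one_div, ← zpow_neg,
    neg_neg]
  refine zpow_le_zpow_right₀ (by exact_mod_cast hp.out.one_le) ?_
  have := padicValNat_le_sub_two (p := p) hp3 ht
  omega

lemma bernoulli_mul_eq (m n : ℕ) :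
    bernoulli m * (n : ℚ) = (∑ j ∈ range n, (j : ℚ) ^ m)
      - ∑ j ∈ range m, bernoulli j * (m.choose j) * (n : ℚ) ^ (m + 1 - j) / ((m + 1 - j : ℕ) : ℚ) := by
  have h := sum_range_pow n m
  rw [Finset.sum_range_succ] at h
  have hlast : bernoulli m * ((m+1).choose m) * (n:ℚ) ^ (m + 1 - m) / (m+1)
      = bernoulli m * n := by
    rw [Nat.choose_succ_self_right, Nat.add_sub_cancel_left, pow_one]
    have : ((m:ℚ)+1) ≠ 0 := by positivity
    push_cast
    field_simp
  have hterm : ∀ j ∈ range m, bernoulli j * ((m+1).choose j) * (n:ℚ) ^ (m + 1 - j) / (m+1)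
      = bernoulli j * (m.choose j) * (n : ℚ) ^ (m + 1 - j) / ((m + 1 - j : ℕ) : ℚ) := by
    intro j hj
    rw [mem_range] at hj
    have hkey : (m.choose j : ℚ) * ((m:ℚ) + 1) = ((m+1).choose j : ℚ) * ((m + 1 - j : ℕ) : ℚ) := by
      exact_mod_cast congrArg (Nat.cast : ℕ → ℚ) (Nat.choose_mul_succ_eq m j)
    have h1 : ((m:ℚ) + 1) ≠ 0 := by positivity
    have h2 : ((m + 1 - j : ℕ) : ℚ) ≠ 0 := by
      have h3 : 0 < m + 1 - j := by omega
      exact_mod_cast h3.ne'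
    rw [div_eq_div_iff h1 h2]
    linear_combination (bernoulli j * (n:ℚ) ^ (m + 1 - j)) * hkey.symm
  rw [Finset.sum_congr rfl hterm, hlast] at h
  linarith [h]


variable {p : ℕ} [hp : Fact p.Prime]

lemma term_bound (hp3 : 3 ≤ p) {m j N : ℕ} (hj : j < m) (hN : 1 ≤ N)
    (hB : padicNorm p (bernoulli j) ≤ p) :
    padicNorm p (bernoulli j * (m.choose j) * (((p ^ N : ℕ) : ℚ)) ^ (m + 1 - j) / ((m + 1 - j : ℕ) : ℚ))
      ≤ (p : ℚ) ^ (1 - 2 * (N : ℤ)) := by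
  have hppos : (0:ℚ) < p := by exact_mod_cast hp.out.pos
  have hp1 : (1:ℚ) < p := by exact_mod_cast hp.out.one_lt
  set t := m + 1 - j with htdef
  have ht : 2 ≤ t := by omega
  rw [div_eq_mul_inv, padicNorm.mul, padicNorm.mul, padicNorm.mul]
  have h1 : padicNorm p ((m.choose j : ℚ)) ≤ 1 := padicNorm_nat_le_one _
  have hne : (p:ℚ) ≠ 0 := ne_of_gt (by exact_mod_cast hp.out.pos)
  have h2 : padicNorm p (((p ^ N : ℕ) : ℚ) ^ t) = (p:ℚ) ^ (-(N:ℤ) * t) := by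
    rw [padicNorm_pow]
    push_cast
    have hstep : ((p:ℚ)⁻¹ ^ N) ^ t = ((p:ℚ) ^ (N * t))⁻¹ := by
      rw [← pow_mul, inv_pow]
    rw [padicNorm_pow, padicNorm.padicNorm_p hp.out.one_lt, hstep, ← zpow_natCast (p:ℚ),
      ← zpow_neg]
    congr 1
    push_cast
    ring
  have h3 : padicNorm p ((t : ℚ))⁻¹ ≤ (p : ℚ) ^ ((t : ℤ) - 2) := padicNorm_nat_inv_le hp3 ht
  calc padicNorm p (bernoulli j) * padicNorm p ((m.choose j : ℚ)) * padicNorm p (((p ^ N : ℕ) : ℚ) ^ t)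
        * padicNorm p ((t : ℚ))⁻¹
      ≤ (p : ℚ) * 1 * ((p:ℚ) ^ (-(N:ℤ) * t)) * ((p : ℚ) ^ ((t : ℤ) - 2)) := by
        rw [h2]
        gcongr <;> first
          | exact padicNorm.nonneg _
          | positivity
          | assumption
    _ = (p : ℚ) ^ (1 + (-(N:ℤ)) * t + ((t:ℤ) - 2)) := by
        rw [zpow_add₀ hne, zpow_add₀ hne, zpow_one, mul_one]
    _ ≤ (p : ℚ) ^ (1 - 2 * (N : ℤ)) := by
        refine zpow_le_zpow_right₀ (le_of_lt hp1) ?_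
        have : (2:ℤ) ≤ t := by exact_mod_cast ht
        nlinarith [this, (by exact_mod_cast hN : (1:ℤ) ≤ N)]

lemma norm_bernoulli_le (hp3 : 3 ≤ p) : ∀ m, padicNorm p (bernoulli m) ≤ p := by
  intro m
  induction m using Nat.strong_induction_on with
  | _ m ih =>
    have hppos : (0:ℚ) < p := by exact_mod_cast hp.out.pos
    have hp1 : (1:ℚ) < p := by exact_mod_cast hp.out.one_lt
    have hid := bernoulli_mul_eq m p
    have hS : padicNorm p (∑ j ∈ range p, (j : ℚ) ^ m) ≤ 1 := by
      have : (∑ j ∈ range p, (j : ℚ) ^ m) = ((∑ j ∈ range p, j ^ m : ℕ) : ℚ) := by push_cast; ring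
      rw [this]; exact padicNorm_nat_le_one _
    have hT : padicNorm p (∑ j ∈ range m, bernoulli j * (m.choose j) * (p : ℚ) ^ (m + 1 - j) / ((m + 1 - j : ℕ) : ℚ)) ≤ (p:ℚ) ^ (1 - 2 * (1:ℤ)) := by
      refine padicNorm.sum_le' (fun j hjm => ?_) (by positivity)
      rw [mem_range] at hjm
      have := term_bound (p := p) hp3 hjm (le_refl 1) (ih j hjm)
      simpa using this
    have h1 : padicNorm p (bernoulli m * (p:ℚ)) ≤ 1 := by
      rw [hid]
      refine le_trans padicNorm.sub ?_
      refine max_le hS (le_trans hT ?_)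
      calc (p:ℚ) ^ (1 - 2 * (1:ℤ)) ≤ (p:ℚ) ^ (0:ℤ) :=
            zpow_le_zpow_right₀ (le_of_lt hp1) (by norm_num)
        _ = 1 := by norm_num
    rw [padicNorm.mul, padicNorm.padicNorm_p hp.out.one_lt] at h1
    calc padicNorm p (bernoulli m) = padicNorm p (bernoulli m) * (p:ℚ)⁻¹ * p := by
          field_simp
      _ ≤ 1 * p := by gcongr
      _ = p := one_mul _

variable {p : ℕ} [hp : Fact p.Prime]

/-- multiplication by a unit permutes residues: sum over `j < n` of `g ((a*j) % n)` equals
sum of `g j`. -/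
lemma sum_mul_mod (g : ℕ → ℤ) {a n : ℕ} (hn : 0 < n) (ha : a.Coprime n) :
    ∑ j ∈ Finset.range n, g ((a * j) % n) = ∑ j ∈ Finset.range n, g j := by
  haveI : NeZero n := ⟨hn.ne'⟩
  have h1 : ∀ (f : ℕ → ℤ), ∑ j ∈ Finset.range n, f j = ∑ x : ZMod n, f x.val := by
    intro f
    refine Finset.sum_nbij' (fun j => (j : ZMod n)) (fun x => x.val) ?_ ?_ ?_ ?_ ?_
    · intro j hj; exact Finset.mem_univ _
    · intro x hx; exact Finset.mem_range.mpr (ZMod.val_lt x)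
    · intro j hj; exact ZMod.val_cast_of_lt (Finset.mem_range.mp hj)
    · intro x hx; exact ZMod.natCast_rightInverse x
    · intro j hj
      rw [ZMod.val_cast_of_lt (Finset.mem_range.mp hj)]
  rw [h1 (fun j => g ((a * j) % n)), h1 g]
  have key : ∀ x : ZMod n, (a * x.val) % n = (((a : ZMod n) * x).val) := by
    intro x
    rw [← ZMod.val_natCast]
    congr 1
    push_cast
    rw [ZMod.natCast_rightInverse x]
  simp_rw [key]
  set u : (ZMod n)ˣ := ZMod.unitOfCoprime a ha with hu
  have hcoe : (u : ZMod n) = (a : ZMod n) := rfl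
  have hbij : Function.Bijective (fun x : ZMod n => (a : ZMod n) * x) := by
    rw [← hcoe]
    exact (Units.mulLeft u).bijective
  exact Fintype.sum_bijective _ hbij _ _ (fun x => rfl)

/-- binomial expansion mod n²: `(n*q + r)^m ≡ r^m + m * r^(m-1) * (n*q)` mod `n²`. -/
lemma pow_mod_sq (n q r m : ℕ) (hm : 1 ≤ m) :
    ((n : ℤ)^2) ∣ (((n * q + r : ℕ) : ℤ) ^ m - (r : ℤ) ^ m - (m : ℤ) * (r : ℤ) ^ (m - 1) * (n * q)) := by
  obtain ⟨m', rfl⟩ : ∃ m', m = m' + 1 := ⟨m - 1, by omega⟩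
  rcases Nat.eq_zero_or_pos m' with h0 | h0
  · subst h0
    push_cast
    ring_nf
    simp
  obtain ⟨m'', rfl⟩ : ∃ m'', m' = m'' + 1 := ⟨m' - 1, by omega⟩
  push_cast
  rw [add_pow ((n:ℤ) * q) (r : ℤ) (m'' + 2)]
  rw [Finset.sum_range_succ', Finset.sum_range_succ']
  have hsimp : (∑ k ∈ Finset.range (m'' + 1), ((n:ℤ) * q) ^ (k + 1 + 1) * (r:ℤ) ^ (m'' + 2 - (k + 1 + 1)) * ((m'' + 2).choose (k + 1 + 1) : ℕ))
        + ((n:ℤ) * q) ^ (0 + 1) * (r:ℤ) ^ (m'' + 2 - (0 + 1)) * ((m'' + 2).choose (0 + 1) : ℕ)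
        + ((n:ℤ) * q) ^ 0 * (r:ℤ) ^ (m'' + 2 - 0) * ((m'' + 2).choose 0 : ℕ)
        - (r:ℤ) ^ (m'' + 1 + 1) - ((m'':ℤ) + 1 + 1) * (r : ℤ) ^ (m'' + 1) * ((n:ℤ) * q)
      = ∑ k ∈ Finset.range (m'' + 1), ((n:ℤ) * q) ^ (k + 2) * (r:ℤ) ^ (m'' - k) * ((m'' + 2).choose (k + 2) : ℕ) := by
    have h3 : ∀ k ∈ Finset.range (m'' + 1),
        ((n:ℤ) * q) ^ (k + 1 + 1) * (r:ℤ) ^ (m'' + 2 - (k + 1 + 1)) * ((m'' + 2).choose (k + 1 + 1) : ℕ)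
        = ((n:ℤ) * q) ^ (k + 2) * (r:ℤ) ^ (m'' - k) * ((m'' + 2).choose (k + 2) : ℕ) := by
      intro k hk
      have : m'' + 2 - (k + 1 + 1) = m'' - k := by omega
      rw [this]
    rw [Finset.sum_congr rfl h3, Nat.choose_one_right, Nat.choose_zero_right]
    push_cast
    ring
  rw [hsimp]
  refine Finset.dvd_sum (fun k hk => ?_)
  have : ((n:ℤ) * q) ^ (k + 2) = (n:ℤ)^2 * ((n:ℤ)^k * (q:ℤ)^(k+2)) := by ring
  rw [this]
  exact Dvd.dvd.mul_right (Dvd.dvd.mul_right ⟨_, rfl⟩ _) _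

lemma voronoi {a m n : ℕ} (hm : 1 ≤ m) (hn : 0 < n) (ha : a.Coprime n) :
    ∃ Z W : ℤ, ((a:ℤ)^m - 1) * (∑ j ∈ Finset.range n, (j:ℤ)^m)
      = (m:ℤ) * (n : ℤ) * Z + ((n : ℤ))^2 * W := by
  have hper : ∀ j : ℕ, ∃ w : ℤ, ((a*j : ℕ):ℤ)^m = (((a*j) % n : ℕ):ℤ)^m
      + (m:ℤ) * ((((a*j) % n : ℕ):ℤ)^(m-1) * ((a*j/n : ℕ):ℤ)) * (n:ℤ)
      + ((n:ℤ))^2 * w := by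
    intro j
    obtain ⟨w, hw⟩ := pow_mod_sq n (a*j/n) ((a*j) % n) m hm
    refine ⟨w, ?_⟩
    have hdm : n * (a*j/n) + (a*j) % n = a * j := Nat.div_add_mod (a*j) n
    rw [hdm] at hw
    linear_combination hw
  choose w hw using hper
  refine ⟨∑ j ∈ Finset.range n, (((a*j) % n : ℕ):ℤ)^(m-1) * ((a*j/n : ℕ):ℤ),
    ∑ j ∈ Finset.range n, w j, ?_⟩
  have hsum : ∑ j ∈ Finset.range n, ((a*j : ℕ):ℤ)^m
      = (∑ j ∈ Finset.range n, (((a*j) % n : ℕ):ℤ)^m)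
        + (∑ j ∈ Finset.range n, (m:ℤ) * ((((a*j) % n : ℕ):ℤ)^(m-1) * ((a*j/n : ℕ):ℤ)) * (n:ℤ))
        + (∑ j ∈ Finset.range n, ((n:ℤ))^2 * w j) := by
    rw [← Finset.sum_add_distrib, ← Finset.sum_add_distrib]
    exact Finset.sum_congr rfl fun j _ => hw j
  have hL : ∑ j ∈ Finset.range n, ((a*j : ℕ):ℤ)^m = (a:ℤ)^m * ∑ j ∈ Finset.range n, (j:ℤ)^m := by
    rw [Finset.mul_sum]
    refine Finset.sum_congr rfl fun j _ => by push_cast; ring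
  have hR1 : ∑ j ∈ Finset.range n, (((a*j) % n : ℕ):ℤ)^m = ∑ j ∈ Finset.range n, (j:ℤ)^m :=
    sum_mul_mod (fun x => (x:ℤ)^m) hn ha
  have h2 : ∑ j ∈ Finset.range n, (m:ℤ) * ((((a*j) % n : ℕ):ℤ)^(m-1) * ((a*j/n : ℕ):ℤ)) * (n:ℤ)
      = (m:ℤ) * (n:ℤ) * ∑ j ∈ Finset.range n, (((a*j) % n : ℕ):ℤ)^(m-1) * ((a*j/n : ℕ):ℤ) := by
    rw [Finset.mul_sum]
    exact Finset.sum_congr rfl fun j _ => by ring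
  have h3 : ∑ j ∈ Finset.range n, ((n:ℤ))^2 * w j = ((n:ℤ))^2 * ∑ j ∈ Finset.range n, w j :=
    (Finset.mul_sum _ _ _).symm
  rw [hR1, h2, h3] at hsum
  rw [sub_mul, one_mul, ← hL, hsum]
  ring

lemma exists_unit_pow_ne (hpodd : Odd p) {m : ℕ} (hndvd : ¬ (p - 1) ∣ m) :
    ∃ a : ℕ, ¬ p ∣ a ∧ ¬ ((p:ℤ) ∣ ((a:ℤ)^m - 1)) := by
  obtain ⟨g, hg⟩ := IsCyclic.exists_generator (α := (ZMod p)ˣ)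
  have horder : orderOf g = p - 1 := by
    rw [orderOf_eq_card_of_forall_mem_zpowers hg, Nat.card_eq_fintype_card, ZMod.card_units p]
  have hgm : g ^ m ≠ 1 := by
    intro h
    exact hndvd (horder ▸ orderOf_dvd_of_pow_eq_one h)
  refine ⟨((g : (ZMod p)ˣ) : ZMod p).val, ?_, ?_⟩
  · intro hdvd
    have h0 : (((((g : (ZMod p)ˣ) : ZMod p).val : ℕ)) : ZMod p) = 0 := by
      exact_mod_cast (ZMod.natCast_eq_zero_iff _ p).mpr hdvd
    rw [ZMod.natCast_rightInverse _] at h0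
    exact g.ne_zero h0
  · intro hdvd
    have h2 : ((((g : (ZMod p)ˣ) : ZMod p).val : ZMod p)) ^ m = 1 := by
      have := (ZMod.intCast_zmod_eq_zero_iff_dvd _ p).mpr hdvd
      push_cast at this
      linear_combination this
    rw [ZMod.natCast_rightInverse _] at h2
    have : g ^ m = 1 := by
      ext
      push_cast
      exact h2
    exact hgm this

lemma E_bound (hp3 : 3 ≤ p) {m N : ℕ} (hN : 1 ≤ N) :
    padicNorm p ((∑ j ∈ Finset.range (p^N), (j:ℚ)^m) - bernoulli m * ((p^N : ℕ):ℚ))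
      ≤ (p:ℚ) ^ (1 - 2*(N:ℤ)) := by
  have hid := bernoulli_mul_eq m (p^N)
  have heq : (∑ j ∈ Finset.range (p^N), (j:ℚ)^m) - bernoulli m * ((p^N : ℕ):ℚ)
      = ∑ j ∈ Finset.range m, bernoulli j * (m.choose j) * ((p^N : ℕ) : ℚ) ^ (m + 1 - j) / ((m + 1 - j : ℕ) : ℚ) := by
    rw [hid]; ring
  rw [heq]
  exact padicNorm.sum_le'
    (fun j hj => term_bound hp3 (Finset.mem_range.mp hj) hN (norm_bernoulli_le hp3 j))
    (by positivity)

/-- §1.1 of the paper: for an odd prime `p` with `(p-1) ∤ 2k`, the Bernoulli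
quotient `B_{2k}/(2k)` is `p`-integral. -/
theorem padicValRat_bernoulli_quotient_nonneg (p : ℕ) (hp : p.Prime) (hodd : Odd p)
    (k : ℕ) (hk : 1 ≤ k) (hndvd : ¬ (p - 1) ∣ 2 * k) :
    0 ≤ padicValRat p (bernoulli (2 * k) / ((2 * k : ℕ) : ℚ)) := by
  haveI : Fact p.Prime := ⟨hp⟩
  have hp3 : 3 ≤ p := by
    rcases hodd with ⟨t, ht⟩
    have := hp.two_le
    omega
  have hp1 : (1:ℚ) < p := by exact_mod_cast hp.one_lt
  have hpne : (p:ℚ) ≠ 0 := by positivity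
  set m := 2 * k with hmdef
  have hm1 : 1 ≤ m := by omega
  by_cases hB0 : bernoulli m = 0
  · simp [hB0]
  have hmq : ((m : ℕ) : ℚ) ≠ 0 := by
    have : 0 < m := hm1
    exact_mod_cast this.ne'
  set e := padicValNat p m with hedef
  set N := e + 1 with hNdef
  set n := p ^ N with hndef
  have hn : 0 < n := pow_pos hp.pos N
  obtain ⟨a, hpa, hpam⟩ := exists_unit_pow_ne hodd hndvd
  have ha : a.Coprime n := (((Nat.Prime.coprime_iff_not_dvd hp).mpr hpa).symm.pow_right N)
  obtain ⟨Z, W, hZW⟩ := voronoi hm1 hn ha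
  set Sq : ℚ := ∑ j ∈ Finset.range n, (j:ℚ)^m with hSqdef
  -- cast Voronoi to ℚ
  have hZWq : ((a:ℚ)^m - 1) * Sq - (m:ℚ) * (n:ℚ) * (Z:ℚ) = ((n:ℚ))^2 * (W:ℚ) := by
    have := congrArg (fun z : ℤ => (z : ℚ)) hZW
    push_cast at this
    rw [hSqdef]
    push_cast
    linear_combination this
  -- norms of natural casts of n
  have hnq : (n : ℚ) = (p:ℚ) ^ (N:ℕ) := by rw [hndef]; push_cast; ring
  have hnormn : padicNorm p (n : ℚ) = (p:ℚ) ^ (-(N:ℤ)) := by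
    rw [hnq, padicNorm_pow, padicNorm.padicNorm_p hp.one_lt, ← zpow_natCast ((p:ℚ))⁻¹,
      inv_zpow, ← zpow_neg]
  have hnormm : padicNorm p (m : ℚ) = (p:ℚ) ^ (-(e:ℤ)) := by
    simp [padicNorm, hmq, padicValRat.of_nat, hedef]
  have hnorma : padicNorm p ((a:ℚ)^m - 1) = 1 := by
    have hcast : ((a:ℚ)^m - 1) = (((a:ℤ)^m - 1 : ℤ) : ℚ) := by push_cast; ring
    rw [hcast]
    exact (padicNorm.int_eq_one_iff _).mpr hpam
  -- norm bounds
  have nb1 : padicNorm p (((a:ℚ)^m - 1) * Sq - (m:ℚ) * (n:ℚ) * (Z:ℚ)) ≤ (p:ℚ) ^ (-((e:ℤ) + N)) := by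
    rw [hZWq, padicNorm.mul, padicNorm_pow, hnormn]
    calc ((p:ℚ) ^ (-(N:ℤ)))^2 * padicNorm p (W:ℚ) ≤ ((p:ℚ) ^ (-(N:ℤ)))^2 * 1 := by
          gcongr <;> first
            | positivity
            | exact padicNorm.of_int W
      _ = (p:ℚ) ^ (-(2*N:ℤ)) := by
          rw [mul_one, ← zpow_natCast ((p:ℚ) ^ (-(N:ℤ))), ← zpow_mul]
          congr 1
          push_cast
          ring
      _ ≤ (p:ℚ) ^ (-((e:ℤ) + N)) := by
          refine zpow_le_zpow_right₀ (le_of_lt hp1) ?_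
          rw [hNdef]; push_cast; omega
  have nb2 : padicNorm p (((a:ℚ)^m - 1) * (Sq - bernoulli m * (n:ℚ))) ≤ (p:ℚ) ^ (-((e:ℤ) + N)) := by
    rw [padicNorm.mul, hnorma, one_mul]
    refine le_trans (E_bound hp3 (by omega)) ?_
    refine zpow_le_zpow_right₀ (le_of_lt hp1) ?_
    rw [hNdef]; push_cast; omega
  have nb3 : padicNorm p ((m:ℚ) * (n:ℚ) * (Z:ℚ)) ≤ (p:ℚ) ^ (-((e:ℤ) + N)) := by
    rw [padicNorm.mul, padicNorm.mul, hnormm, hnormn]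
    calc (p:ℚ) ^ (-(e:ℤ)) * (p:ℚ) ^ (-(N:ℤ)) * padicNorm p (Z:ℚ)
        ≤ (p:ℚ) ^ (-(e:ℤ)) * (p:ℚ) ^ (-(N:ℤ)) * 1 := by
          gcongr <;> first
            | positivity
            | exact padicNorm.of_int Z
      _ = (p:ℚ) ^ (-((e:ℤ) + N)) := by
          rw [mul_one, ← zpow_add₀ hpne, neg_add]
  -- the key rearrangement
  have hkey : ((a:ℚ)^m - 1) * (bernoulli m * (n:ℚ))
      = ((m:ℚ) * (n:ℚ) * (Z:ℚ) + (((a:ℚ)^m - 1) * Sq - (m:ℚ) * (n:ℚ) * (Z:ℚ)))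
        - ((a:ℚ)^m - 1) * (Sq - bernoulli m * (n:ℚ)) := by ring
  have hmain : padicNorm p (((a:ℚ)^m - 1) * (bernoulli m * (n:ℚ))) ≤ (p:ℚ) ^ (-((e:ℤ) + N)) := by
    rw [hkey]
    refine le_trans padicNorm.sub (max_le ?_ nb2)
    refine le_trans padicNorm.nonarchimedean (max_le nb3 nb1)
  rw [padicNorm.mul, hnorma, one_mul, padicNorm.mul, hnormn] at hmain
  -- deduce padicNorm p (bernoulli m) ≤ p^(-e)
  have hnormB : padicNorm p (bernoulli m) ≤ (p:ℚ) ^ (-(e:ℤ)) := by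
    have hposN : (0:ℚ) < (p:ℚ) ^ (-(N:ℤ)) := by positivity
    rw [← mul_le_mul_iff_left₀ hposN]
    calc padicNorm p (bernoulli m) * (p:ℚ) ^ (-(N:ℤ)) ≤ (p:ℚ) ^ (-((e:ℤ) + N)) := hmain
      _ = (p:ℚ) ^ (-(e:ℤ)) * (p:ℚ) ^ (-(N:ℤ)) := by rw [← zpow_add₀ hpne, neg_add]
  -- conclude
  have hq0 : bernoulli m / ((m:ℕ):ℚ) ≠ 0 := div_ne_zero hB0 hmq
  have hnormq : padicNorm p (bernoulli m / ((m:ℕ):ℚ)) ≤ 1 := by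
    rw [padicNorm.div, hnormm]
    rw [div_le_one (by positivity)]
    simpa using hnormB
  have := padicNorm.eq_zpow_of_nonzero (p := p) hq0
  rw [this] at hnormq
  have h1 : (p:ℚ) ^ (-padicValRat p (bernoulli m / ((m:ℕ):ℚ))) ≤ (p:ℚ) ^ (0:ℤ) := by
    simpa using hnormq
  have h2 := (zpow_le_zpow_iff_right₀ hp1).mp h1
  omega
end

section
/- Let p be an odd prime, u an integer whose image in ℤ/p²ℤ is a unit of multiplicative order p(p−1) (a primitive root modulo p²), and k ≥ 1 a natural number with (p−1) dividing 2k. Then the p-adic valuation of the integer u^{2k} − 1 equals the negative of the p-adic valuation of the rational number B_{2k}/(2k); that is, padicValInt p (u^{2k} − 1) = −padicValRat p (bernoulli (2k) / (2k)). -/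
open Finset

private lemma aux_three_pow (j : ℕ) (hj : 1 ≤ j) : j + 2 ≤ 3 ^ j := by
  induction j with
  | zero => omega
  | succ n ih =>
    rcases Nat.eq_or_lt_of_le hj with h | h
    · simp [← h]
    · have := ih (by omega)
      have h3 : 3 ^ (n + 1) = 3 * 3 ^ n := by ring
      omega

private lemma aux_val_le (p j : ℕ) (hp : 3 ≤ p) (hj : 1 ≤ j) :
    padicValNat p (j + 1) + 1 ≤ j := by
  by_contra h
  push_neg at h
  have hv : j ≤ padicValNat p (j + 1) := by omega
  have h1 : p ^ padicValNat p (j + 1) ≤ j + 1 :=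
    Nat.le_of_dvd (by omega) pow_padicValNat_dvd
  have h2 : 3 ^ j ≤ p ^ padicValNat p (j + 1) :=
    le_trans (Nat.pow_le_pow_left hp j) (Nat.pow_le_pow_right (by omega) hv)
  have := aux_three_pow j hj
  omega

private lemma aux_term_bound (p : ℕ) [hp : Fact p.Prime] (hp3 : 3 ≤ p) {i m : ℕ} (him : i < m)
    (hB : padicNorm p (bernoulli i) ≤ p) :
    padicNorm p (bernoulli i * ((m + 1).choose i) * (p : ℚ) ^ (m + 1 - i) / (m + 1))
      ≤ (p : ℚ)⁻¹ := by
  have hq1 : (1 : ℚ) < p := by exact_mod_cast hp.out.one_lt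
  have hq0 : (0 : ℚ) < p := by linarith
  set j := m - i with hjdef
  have hj1 : 1 ≤ j := by omega
  have hmi : m + 1 - i = j + 1 := by omega
  -- rewrite the term
  have key : (((m + 1).choose i : ℚ)) / (m + 1) = ((m.choose i : ℚ)) / (j + 1) := by
    rw [div_eq_div_iff (by positivity) (by positivity)]
    have h2 := Nat.choose_mul_succ_eq m i
    rw [hmi] at h2
    exact_mod_cast congrArg (Nat.cast : ℕ → ℚ) h2.symm
  have hrw : bernoulli i * ((m + 1).choose i) * (p : ℚ) ^ (m + 1 - i) / (m + 1)
      = bernoulli i * ((m.choose i : ℚ) * ((p : ℚ) ^ (j + 1) / (j + 1))) := by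
    rw [hmi]
    have step : bernoulli i * ((m + 1).choose i) * (p : ℚ) ^ (j + 1) / (m + 1)
        = bernoulli i * (p : ℚ) ^ (j + 1) * ((((m + 1).choose i : ℚ)) / (m + 1)) := by ring
    rw [step, key]
    ring
  rw [hrw, padicNorm.mul, padicNorm.mul]
  -- norm of the p-power quotient
  have hv := aux_val_le p j hp3 hj1
  have hr0 : ((p : ℚ) ^ (j + 1) / (j + 1)) ≠ 0 := by positivity
  have hval : padicValRat p ((p : ℚ) ^ (j + 1) / (j + 1)) = (j + 1 : ℤ) - padicValNat p (j + 1) := by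
    rw [padicValRat.div (by positivity) (by positivity), padicValRat.pow,
      padicValRat.self hp.out.one_lt]
    rw [show ((j : ℚ) + 1) = ((j + 1 : ℕ) : ℚ) by push_cast; ring, ← padicValRat_of_nat]
    push_cast; ring
  have hnorm : padicNorm p ((p : ℚ) ^ (j + 1) / (j + 1)) ≤ (p : ℚ) ^ (-2 : ℤ) := by
    rw [padicNorm.eq_zpow_of_nonzero hr0, hval]
    apply zpow_le_zpow_right₀ (le_of_lt hq1)
    omega
  have hch : padicNorm p ((m.choose i : ℚ)) ≤ 1 := padicNorm.of_nat _
  have t1 : padicNorm p ((m.choose i : ℚ)) * padicNorm p ((p : ℚ) ^ (j + 1) / (j + 1))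
      ≤ 1 * (p : ℚ) ^ (-2 : ℤ) :=
    mul_le_mul hch hnorm (padicNorm.nonneg _) zero_le_one
  have t2 : padicNorm p (bernoulli i) * (padicNorm p ((m.choose i : ℚ)) *
        padicNorm p ((p : ℚ) ^ (j + 1) / (j + 1)))
      ≤ (p : ℚ) * (1 * (p : ℚ) ^ (-2 : ℤ)) :=
    mul_le_mul hB t1 (mul_nonneg (padicNorm.nonneg _) (padicNorm.nonneg _)) (le_of_lt hq0)
  refine t2.trans (le_of_eq ?_)
  have hz : (p : ℚ) ^ (-2 : ℤ) = ((p : ℚ) ^ (2 : ℕ))⁻¹ := by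
    rw [zpow_neg]; norm_cast
  rw [one_mul, hz, sq]
  field_simp


private lemma aux_bernoulli_mul_p (p m : ℕ) :
    bernoulli m * p = (∑ x ∈ range p, (x : ℚ) ^ m) -
      ∑ i ∈ range m, bernoulli i * ((m + 1).choose i) * (p : ℚ) ^ (m + 1 - i) / (m + 1) := by
  have h := sum_range_pow p m
  rw [sum_range_succ] at h
  have hc : (((m + 1).choose m : ℕ) : ℚ) = (m : ℚ) + 1 := by
    rw [Nat.choose_succ_self_right]; push_cast; ring
  have hm1 : ((m : ℚ) + 1) ≠ 0 := by positivity
  have hlast : bernoulli m * ((m + 1).choose m) * (p : ℚ) ^ (m + 1 - m) / (m + 1)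
      = bernoulli m * p := by
    rw [hc, Nat.add_sub_cancel_left, pow_one]
    field_simp
  rw [hlast] at h
  linarith [h]


private lemma aux_padicNorm_bernoulli_le (p : ℕ) [hp : Fact p.Prime] (hp3 : 3 ≤ p) (m : ℕ) :
    padicNorm p (bernoulli m) ≤ p := by
  have hq1 : (1 : ℚ) < p := by exact_mod_cast hp.out.one_lt
  have hq0 : (0 : ℚ) < p := by linarith
  induction m using Nat.strong_induction_on with
  | _ m ih =>
    rcases Nat.eq_zero_or_pos m with rfl | hm
    · simpa using le_of_lt hq1
    have key := aux_bernoulli_mul_p p m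
    have hS : padicNorm p (∑ x ∈ range p, (x : ℚ) ^ m) ≤ 1 := by
      apply padicNorm.sum_le' _ zero_le_one
      intro x _
      have : ((x : ℚ) ^ m) = (((x ^ m : ℕ)) : ℚ) := by push_cast; ring
      rw [this]
      exact padicNorm.of_nat _
    have hT : padicNorm p (∑ i ∈ range m,
        bernoulli i * ((m + 1).choose i) * (p : ℚ) ^ (m + 1 - i) / (m + 1)) ≤ 1 := by
      apply padicNorm.sum_le' _ zero_le_one
      intro i hi
      have := aux_term_bound p hp3 (mem_range.mp hi) (ih i (mem_range.mp hi))
      refine this.trans ?_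
      rw [inv_le_one_iff₀]
      right; linarith
    have hBP : padicNorm p (bernoulli m * p) ≤ 1 := by
      rw [key]
      exact le_trans padicNorm.sub (max_le hS hT)
    rw [padicNorm.mul, padicNorm.padicNorm_p_of_prime] at hBP
    calc padicNorm p (bernoulli m)
        = padicNorm p (bernoulli m) * (p : ℚ)⁻¹ * p := by field_simp
      _ ≤ 1 * p := by
          apply mul_le_mul_of_nonneg_right hBP (le_of_lt hq0)
      _ = p := one_mul _

private lemma aux_cong (p : ℕ) [hp : Fact p.Prime] {m : ℕ} (hm : 0 < m)
    (hdvd : (p - 1) ∣ m) : (p : ℤ) ∣ ((∑ x ∈ range p, x ^ m : ℕ) : ℤ) + 1 := by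
  classical
  have hzmod : ((∑ x ∈ range p, x ^ m : ℕ) : ZMod p) = -1 := by
    push_cast
    have h1 : ∑ x ∈ range p, (x : ZMod p) ^ m = ∑ x : ZMod p, x ^ m := by
      exact_mod_cast (by
        apply Finset.sum_nbij' (i := fun (x : ℕ) => (x : ZMod p)) (j := fun (y : ZMod p) => y.val)
        · intro a ha; exact mem_univ _
        · intro a ha; exact mem_range.mpr (ZMod.val_lt a)
        · intro a ha; exact ZMod.val_cast_of_lt (mem_range.mp ha)
        · intro a ha; exact (ZMod.natCast_rightInverse a)
        · intro a ha; rfl : ∑ x ∈ range p, ((x : ZMod p)) ^ m = ∑ x : ZMod p, x ^ m)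
    rw [h1]
    have h2 : ∑ x : ZMod p, x ^ m = ∑ x ∈ univ \ {(0 : ZMod p)}, x ^ m := by
      rw [← sum_sdiff ({0} : Finset (ZMod p)).subset_univ, sum_singleton,
        zero_pow (Nat.pos_iff_ne_zero.mp hm), add_zero]
    let φ : (ZMod p)ˣ ↪ ZMod p := ⟨fun x => x, Units.val_injective⟩
    have h3 : univ.map φ = univ \ {0} := by
      ext x
      simp only [mem_map, mem_univ, Function.Embedding.coeFn_mk, true_and, mem_sdiff,
        mem_singleton, φ]
      exact isUnit_iff_ne_zero
    have h4 : ∑ x ∈ univ \ {(0 : ZMod p)}, x ^ m = ∑ x : (ZMod p)ˣ, ((x : ZMod p)) ^ m := by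
      simp [φ, ← h3, univ.sum_map φ]
    rw [h2, h4, FiniteField.sum_pow_units, ZMod.card, if_pos hdvd]
  exact (ZMod.intCast_zmod_eq_zero_iff_dvd _ p).mp
    (by rw [Int.cast_add, Int.cast_one, Int.cast_natCast, hzmod]; ring)


private lemma aux_vsc (p : ℕ) [hp : Fact p.Prime] (hp3 : 3 ≤ p) {m : ℕ} (hm : 0 < m)
    (hdvd : (p - 1) ∣ m) :
    bernoulli m ≠ 0 ∧ padicValRat p (bernoulli m) = -1 := by
  have hq1 : (1 : ℚ) < p := by exact_mod_cast hp.out.one_lt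
  have hq0 : (0 : ℚ) < p := by linarith
  have hinv : (p : ℚ)⁻¹ < 1 := by rw [inv_eq_one_div, div_lt_one hq0]; exact hq1
  set S : ℚ := ((∑ x ∈ range p, x ^ m : ℕ) : ℚ) with hSdef
  have hSsum : S = ∑ x ∈ range p, (x : ℚ) ^ m := by rw [hSdef]; push_cast; rfl
  have key := aux_bernoulli_mul_p p m
  have hT : padicNorm p (∑ i ∈ range m,
      bernoulli i * ((m + 1).choose i) * (p : ℚ) ^ (m + 1 - i) / (m + 1)) ≤ (p : ℚ)⁻¹ := by
    apply padicNorm.sum_le' _ (by positivity)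
    intro i hi
    exact aux_term_bound p hp3 (mem_range.mp hi) (aux_padicNorm_bernoulli_le p hp3 i)
  have h1 : padicNorm p (bernoulli m * p - S) ≤ (p : ℚ)⁻¹ := by
    have e : bernoulli m * p - S = -(∑ i ∈ range m,
        bernoulli i * ((m + 1).choose i) * (p : ℚ) ^ (m + 1 - i) / (m + 1)) := by
      rw [hSsum, key]; ring
    rw [e, padicNorm.neg]; exact hT
  have h2 : padicNorm p (S + 1) ≤ (p : ℚ)⁻¹ := by
    have hdv : ((p ^ 1 : ℕ) : ℤ) ∣ ((∑ x ∈ range p, x ^ m : ℕ) : ℤ) + 1 := by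
      simpa using aux_cong p hm hdvd
    have h := padicNorm.dvd_iff_norm_le.mp hdv
    have e : ((((∑ x ∈ range p, x ^ m : ℕ) : ℤ) + 1 : ℤ) : ℚ) = S + 1 := by
      rw [hSdef]; push_cast; ring
    rw [e] at h
    simpa using h
  have h3 : padicNorm p (bernoulli m * p + 1) ≤ (p : ℚ)⁻¹ := by
    have e : bernoulli m * (p : ℚ) + 1 = (bernoulli m * p - S) + (S + 1) := by ring
    rw [e]
    exact le_trans padicNorm.nonarchimedean (max_le h1 h2)
  have hlt : padicNorm p (bernoulli m * p + 1) < 1 := lt_of_le_of_lt h3 hinv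
  have hne1 : padicNorm p (bernoulli m * p + 1) ≠ padicNorm p (-1 : ℚ) := by
    rw [padicNorm.neg, padicNorm.one]
    exact ne_of_lt hlt
  have h4 : padicNorm p (bernoulli m * p) = 1 := by
    have e : bernoulli m * (p : ℚ) = (bernoulli m * p + 1) + (-1) := by ring
    rw [e, padicNorm.add_eq_max_of_ne hne1, padicNorm.neg, padicNorm.one]
    exact max_eq_right (le_of_lt hlt)
  have hb0 : bernoulli m ≠ 0 := by
    intro h
    rw [h, zero_mul, padicNorm.zero] at h4
    norm_num at h4
  have h5 : padicNorm p (bernoulli m) = p := by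
    rw [padicNorm.mul, padicNorm.padicNorm_p_of_prime] at h4
    calc padicNorm p (bernoulli m) = (padicNorm p (bernoulli m) * (p : ℚ)⁻¹) * p := by
          field_simp
      _ = 1 * p := by rw [h4]
      _ = p := one_mul _
  refine ⟨hb0, ?_⟩
  have h6 := padicNorm.eq_zpow_of_nonzero (p := p) hb0
  rw [h5] at h6
  have h7 : (p : ℚ) ^ (1 : ℤ) = (p : ℚ) ^ (-padicValRat p (bernoulli m)) := by
    rw [zpow_one]; exact h6
  have := zpow_right_injective₀ hq0 (ne_of_gt hq1) h7
  linarith [this]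


private lemma aux_lhs (p : ℕ) (hp : p.Prime) (hodd : Odd p)
    (u : ℤ) (hu : IsUnit (u : ZMod (p ^ 2)))
    (hord : orderOf (u : ZMod (p ^ 2)) = p * (p - 1))
    (k : ℕ) (hk : 1 ≤ k) (hdvd : (p - 1) ∣ 2 * k) :
    padicValInt p (u ^ (2 * k) - 1) = 1 + padicValNat p (2 * k) := by
  haveI : Fact p.Prime := ⟨hp⟩
  have hp2 : 2 ≤ p := hp.two_le
  have hp3 : 3 ≤ p := by
    have h2 : p ≠ 2 := by rintro rfl; simp [Nat.odd_iff] at hodd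
    omega
  -- p does not divide u
  have hmap : IsUnit ((u : ℤ) : ZMod p) := by
    have := hu.map (ZMod.castHom (dvd_pow_self p two_ne_zero) (ZMod p))
    rwa [map_intCast] at this
  have hup : ¬ (p : ℤ) ∣ u := by
    intro hdvd'
    have h0 : ((u : ℤ) : ZMod p) = 0 := (ZMod.intCast_zmod_eq_zero_iff_dvd u p).mpr hdvd'
    rw [h0] at hmap
    exact hmap.ne_zero rfl
  -- v_p(u^(p-1) - 1) = 1
  have h1 : (p : ℤ) ∣ u ^ (p - 1) - 1 := by
    have hpow := ZMod.pow_card_sub_one_eq_one hmap.ne_zero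
    have hz : ((u ^ (p - 1) - 1 : ℤ) : ZMod p) = 0 := by
      push_cast
      rw [hpow]; ring
    exact (ZMod.intCast_zmod_eq_zero_iff_dvd _ p).mp hz
  have h2 : ¬ ((p : ℤ) ^ 2 ∣ u ^ (p - 1) - 1) := by
    intro hd
    have hz : ((u ^ (p - 1) - 1 : ℤ) : ZMod (p ^ 2)) = 0 := by
      rw [ZMod.intCast_zmod_eq_zero_iff_dvd]
      exact_mod_cast hd
    have hpow : (u : ZMod (p ^ 2)) ^ (p - 1) = 1 := by
      push_cast at hz
      exact sub_eq_zero.mp hz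
    have hdvd2 : p * (p - 1) ∣ p - 1 := hord ▸ orderOf_dvd_of_pow_eq_one hpow
    have hle := Nat.le_of_dvd (by omega) hdvd2
    have key : 2 * (p - 1) ≤ p * (p - 1) := Nat.mul_le_mul_right _ hp2
    have h21 : 2 ≤ p - 1 := by omega
    linarith
  have e1 : emultiplicity ((p : ℤ)) (u ^ (p - 1) - 1) = ((1 : ℕ) : ℕ∞) := by
    rw [emultiplicity_eq_coe]
    exact ⟨by simpa using h1, by simpa using h2⟩
  obtain ⟨m, hm⟩ := hdvd
  have hm0 : m ≠ 0 := by rintro rfl; omega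
  have hx : ¬ (p : ℤ) ∣ u ^ (p - 1) := fun h => hup ((Nat.prime_iff_prime_int.mp hp).dvd_of_dvd_pow h)
  have hLTE := Int.emultiplicity_pow_sub_pow hp hodd (x := u ^ (p - 1)) (y := 1)
    (by simpa using h1) hx m
  rw [one_pow, ← pow_mul, ← hm, e1,
    ← padicValNat_eq_emultiplicity hm0] at hLTE
  -- value transfer
  have hv : padicValNat p (2 * k) = padicValNat p m := by
    rw [hm, padicValNat.mul (by omega) hm0, padicValNat.eq_zero_of_not_dvd, zero_add]
    exact fun h => absurd (Nat.le_of_dvd (by omega) h) (by omega)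
  -- positivity of u^(2k) - 1
  have hu1 : u ≠ 1 := by
    rintro rfl
    simp only [Int.cast_one, orderOf_one] at hord
    have key : 2 * (p - 1) ≤ p * (p - 1) := Nat.mul_le_mul_right _ hp2
    have h21 : 2 ≤ p - 1 := by omega
    omega
  have hun1 : u ≠ -1 := by
    rintro rfl
    have hsq : ((-1 : ℤ) : ZMod (p ^ 2)) ^ 2 = 1 := by norm_num
    have hdvd2 : p * (p - 1) ∣ 2 := hord ▸ orderOf_dvd_of_pow_eq_one hsq
    have hle := Nat.le_of_dvd (by omega) hdvd2
    have key : 2 * (p - 1) ≤ p * (p - 1) := Nat.mul_le_mul_right _ hp2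
    have h21 : 2 ≤ p - 1 := by omega
    linarith
  have hu0 : u ≠ 0 := by rintro rfl; exact hup (dvd_zero _)
  have hsq : 1 < u ^ 2 := by
    have : 2 ≤ u ∨ u ≤ -2 := by omega
    rcases this with h | h <;> nlinarith
  have hpos : 0 < u ^ (2 * k) - 1 := by
    have h1k : 1 < (u ^ 2) ^ k := one_lt_pow₀ hsq (by omega)
    rw [pow_mul]
    omega
  set z : ℤ := u ^ (2 * k) - 1 with hzdef
  have hznat : (z.natAbs : ℤ) = z := Int.natAbs_of_nonneg (le_of_lt hpos)
  have hchain : ((padicValInt p z : ℕ) : ℕ∞) = ((1 + padicValNat p (2 * k) : ℕ) : ℕ∞) := by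
    have e2 : ((padicValInt p z : ℕ) : ℕ∞) = emultiplicity p z.natAbs :=
      padicValNat_eq_emultiplicity (Int.natAbs_pos.mpr (ne_of_gt hpos)).ne'
    rw [e2, ← Int.natCast_emultiplicity, hznat, hzdef, hLTE, hv]
    push_cast
    ring
  exact_mod_cast hchain


/-- §1.1 of the paper: for an odd prime `p`, `u` a primitive root modulo `p²`,
and `(p-1) ∣ 2k`, the `p`-adic valuation of `u^{2k} - 1` equals the negative of
the `p`-adic valuation of the Bernoulli quotient `B_{2k}/(2k)`. -/
theorem padicValInt_pow_sub_one_eq_neg_padicValRat_bernoulli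
    (p : ℕ) (hp : p.Prime) (hodd : Odd p)
    (u : ℤ) (hu : IsUnit (u : ZMod (p ^ 2)))
    (hord : orderOf (u : ZMod (p ^ 2)) = p * (p - 1))
    (k : ℕ) (hk : 1 ≤ k) (hdvd : (p - 1) ∣ 2 * k) :
    (padicValInt p (u ^ (2 * k) - 1) : ℤ) =
      -padicValRat p (bernoulli (2 * k) / ((2 * k : ℕ) : ℚ)) := by
  haveI : Fact p.Prime := ⟨hp⟩
  have hp3 : 3 ≤ p := by
    have := hp.two_le
    have h2 : p ≠ 2 := by rintro rfl; simp [Nat.odd_iff] at hodd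
    omega
  obtain ⟨hne, hval⟩ := aux_vsc p hp3 (m := 2 * k) (by omega) hdvd
  have h2k : ((2 * k : ℕ) : ℚ) ≠ 0 := by positivity
  rw [padicValRat.div hne h2k, hval, ← padicValRat_of_nat, aux_lhs p hp hodd u hu hord k hk hdvd]
  push_cast
  ring
end
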